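/- For every real c > 1, the polynomial equation [(1 + √(c−1))²·x² − (c−1)]·(x−1)² − (2x − 1) = 0 has a unique real root x* with x* > 1, and at c = 3 the resulting value Ψ(3) = ((1+√2)²/2)·(x*)² is strictly less than 6. -/
import Mathlib

private lemma g_mono (A B x y : ℝ) (hA : 0 < A) (hx : 1 < x) (hxy : x < y) :
    A*x^2 - B - 2/(x-1) - 1/(x-1)^2 < A*y^2 - B - 2/(y-1) - 1/(y-1)^2 := by
  have hx1 : 0 < x - 1 := by linarith
  have hy1 : 0 < y - 1 := by linarith
  have h1 : 1/(y-1) < 1/(x-1) := one_div_lt_one_div_of_lt hx1 (by linarith)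
  have h2 : 1/(y-1)^2 < 1/(x-1)^2 := by
    apply one_div_lt_one_div_of_lt (by positivity)
    exact pow_lt_pow_left₀ (by linarith) hx1.le (by norm_num)
  have h1' : 2/(y-1) < 2/(x-1) := by
    rw [div_lt_div_iff₀ hy1 hx1]; nlinarith
  have h3 : A*x^2 < A*y^2 := by
    have : x^2 < y^2 := by nlinarith
    exact mul_lt_mul_of_pos_left this hA
  nlinarith

private lemma f_eq (A B x : ℝ) (hx : x ≠ 1) :
    (A*x^2 - B)*(x-1)^2 - (2*x-1) = (A*x^2 - B - 2/(x-1) - 1/(x-1)^2) * (x-1)^2 := by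
  have h : x - 1 ≠ 0 := sub_ne_zero.mpr hx
  field_simp
  ring

private lemma g_zero (A B x : ℝ) (hx : 1 < x)
    (hfx : (A*x^2 - B)*(x-1)^2 - (2*x-1) = 0) :
    A*x^2 - B - 2/(x-1) - 1/(x-1)^2 = 0 := by
  have hne : (x-1)^2 ≠ 0 := pow_ne_zero _ (sub_ne_zero.mpr hx.ne')
  have h := f_eq A B x hx.ne'
  rw [h] at hfx
  exact (mul_eq_zero.mp hfx).resolve_right hne

private lemma roots_unique (A B x y : ℝ) (hA : 0 < A) (hx : 1 < x) (hy : 1 < y)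
    (hfx : (A*x^2 - B)*(x-1)^2 - (2*x-1) = 0)
    (hfy : (A*y^2 - B)*(y-1)^2 - (2*y-1) = 0) : y = x := by
  have gx := g_zero A B x hx hfx
  have gy := g_zero A B y hy hfy
  rcases lt_trichotomy y x with h|h|h
  · have := g_mono A B y x hA hy h; linarith
  · exact h
  · have := g_mono A B x y hA hx h; linarith

private lemma root_lt_of_pos (A B x r : ℝ) (hA : 0 < A) (hx : 1 < x) (hr : 1 < r)
    (hfx : (A*x^2 - B)*(x-1)^2 - (2*x-1) = 0)
    (hfr : 0 < (A*r^2 - B)*(r-1)^2 - (2*r-1)) : x < r := by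
  have gx := g_zero A B x hx hfx
  have hgr : 0 < A*r^2 - B - 2/(r-1) - 1/(r-1)^2 := by
    have h := f_eq A B r hr.ne'
    rw [h] at hfr
    have h2 : 0 < (r-1)^2 := pow_pos (by linarith) 2
    nlinarith
  by_contra h
  push_neg at h
  rcases eq_or_lt_of_le h with heq | hlt
  · rw [heq] at hgr; linarith
  · have := g_mono A B r x hA hr hlt; linarith

theorem stmt_7 :
    (∀ c : ℝ, 1 < c → ∃! x : ℝ, 1 < x ∧
      ((1 + Real.sqrt (c-1))^2 * x^2 - (c-1)) * (x-1)^2 - (2*x - 1) = 0) ∧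
    (∀ x : ℝ, 1 < x →
      ((1 + Real.sqrt 2)^2 * x^2 - 2) * (x-1)^2 - (2*x - 1) = 0 →
      ((1 + Real.sqrt 2)^2 / 2) * x^2 < 6) := by
  constructor
  · intro c hc
    set s := Real.sqrt (c-1) with hsdef
    have hs0 : 0 ≤ s := Real.sqrt_nonneg _
    have hA : 0 < (1+s)^2 := by positivity
    have hA1 : 1 ≤ (1+s)^2 := by nlinarith
    obtain ⟨x, hx, hfx⟩ : ∃ x, 1 < x ∧ ((1+s)^2*x^2 - (c-1))*(x-1)^2 - (2*x-1) = 0 := by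
      have hcont : ContinuousOn
          (fun x : ℝ => ((1+s)^2*x^2 - (c-1))*(x-1)^2 - (2*x-1)) (Set.Icc 1 (c+1)) := by
        apply Continuous.continuousOn; fun_prop
      have hM : (1:ℝ) ≤ c+1 := by linarith
      have key := intermediate_value_Icc hM hcont
      have hf1 : ((1+s)^2*(1:ℝ)^2 - (c-1))*((1:ℝ)-1)^2 - (2*1-1) = -1 := by ring
      have hfM : 0 < ((1+s)^2*(c+1)^2 - (c-1))*((c+1)-1)^2 - (2*(c+1)-1) := by
        have hc0 : (0:ℝ) < c := by linarith
        have h1 : 1*(c+1)^2*c^2 ≤ (1+s)^2*(c+1)^2*c^2 :=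
          mul_le_mul_of_nonneg_right (mul_le_mul_of_nonneg_right hA1 (sq_nonneg (c+1))) (sq_nonneg c)
        nlinarith [sq_nonneg (c-1), sq_nonneg c, mul_pos (mul_pos hc0 hc0) hc0, mul_pos hc0 hc0]
      have h0 : (0:ℝ) ∈ Set.Icc (((1+s)^2*(1:ℝ)^2 - (c-1))*((1:ℝ)-1)^2 - (2*1-1))
          (((1+s)^2*(c+1)^2 - (c-1))*((c+1)-1)^2 - (2*(c+1)-1)) := by
        rw [hf1]; constructor <;> [linarith; linarith]
      obtain ⟨x, hxmem, hxeq⟩ := key h0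
      refine ⟨x, ?_, hxeq⟩
      rcases eq_or_lt_of_le hxmem.1 with h|h
      · exfalso
        rw [← h] at hxeq
        simp only at hxeq
        nlinarith
      · exact h
    exact ⟨x, ⟨hx, hfx⟩, fun y ⟨hy, hfy⟩ => roots_unique ((1+s)^2) (c-1) x y hA hx hy hfx hfy⟩
  · intro x hx hfx
    set s := Real.sqrt 2 with hsdef
    have hs0 : 0 ≤ s := Real.sqrt_nonneg _
    have hs2 : s^2 = 2 := Real.sq_sqrt (by norm_num)
    have hslb : 1.4142 < s := by nlinarith
    have hsub : s < 1.4143 := by nlinarith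
    have hA : 0 < (1+s)^2 := by positivity
    have hxlt : x < 1.434 := by
      apply root_lt_of_pos ((1+s)^2) 2 x 1.434 hA hx (by norm_num) hfx
      nlinarith
    have hx2 : x^2 < 1.434^2 := by nlinarith
    nlinarith
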